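/- arXiv:1809.05570 — 2 statements merged into one kernel-verified Lean document; each statement's English description precedes it below -/
import Mathlib

section
/- Let Ω ⊆ ℝ be open and φ : Ω → ℝ^{n+1} an n-times differentiable map such that at every s ∈ Ω the vectors φ(s), φ'(s), …, φ⁽ⁿ⁾(s) are linearly independent. Then for every nonzero linear functional ℓ : ℝ^{n+1} → ℝ, the zero set {s ∈ Ω : ℓ(φ(s)) = 0} is discrete in Ω. -/
open Filter Topology Set

/-- If `f` is `C^k` on an open set `u ∋ s`, its derivatives of order `< k` vanish at `s`,
and its `k`-th derivative at `s` is nonzero, then `f` is nonzero on a punctured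
neighborhood of `s`. -/
lemma isolated_zero_aux : ∀ (k : ℕ) (f : ℝ → ℝ) (u : Set ℝ), IsOpen u → ∀ s ∈ u,
    ContDiffOn ℝ k f u → (∀ j < k, iteratedDeriv j f s = 0) → iteratedDeriv k f s ≠ 0 →
    ∀ᶠ t in 𝓝[≠] s, f t ≠ 0 := by
  intro k
  induction k with
  | zero =>
    intro f u hu s hs hf _ hk
    rw [iteratedDeriv_zero] at hk
    have hc : ContinuousAt f s := hf.continuousOn.continuousAt (hu.mem_nhds hs)
    exact (hc.eventually_ne hk).filter_mono nhdsWithin_le_nhds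
  | succ k IH =>
    intro f u hu s hs hf hj hk
    have hf' : ContDiffOn ℝ k (deriv f) u := by
      have hf2 : ContDiffOn ℝ ((k : ℕ∞) + 1) f u := by exact_mod_cast hf
      rw [contDiffOn_succ_iff_deriv_of_isOpen hu] at hf2
      exact hf2.2.2
    have hfd : DifferentiableOn ℝ f u := by
      apply hf.differentiableOn
      simp
    have hd : ∀ᶠ t in 𝓝[≠] s, deriv f t ≠ 0 := by
      apply IH (deriv f) u hu s hs hf'
      · intro j hjk
        rw [← iteratedDeriv_succ']
        exact hj (j + 1) (by omega)
      · rw [← iteratedDeriv_succ']; exact hk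
    have hfs : f s = 0 := by simpa using hj 0 (by omega)
    rw [eventually_nhdsWithin_iff] at hd
    have hnb : ∀ᶠ t in 𝓝 s, (t ∈ ({s}ᶜ : Set ℝ) → deriv f t ≠ 0) ∧ t ∈ u :=
      hd.and (hu.eventually_mem hs)
    rw [Metric.eventually_nhds_iff_ball] at hnb
    obtain ⟨ε, hε, hball⟩ := hnb
    rw [eventually_nhdsWithin_iff, Metric.eventually_nhds_iff_ball]
    refine ⟨ε, hε, fun t ht hts => ?_⟩
    intro hft
    have hts' : t ≠ s := hts
    have ht2 : |t - s| < ε := by rw [Metric.mem_ball, Real.dist_eq] at ht; exact ht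
    have h3 := abs_lt.mp ht2
    have hsub : ∀ x, min s t ≤ x → x ≤ max s t → x ∈ Metric.ball s ε := by
      intro x h1 h2
      rw [Metric.mem_ball, Real.dist_eq, abs_lt]
      rcases le_total s t with h | h
      · simp only [min_eq_left h, max_eq_right h] at h1 h2
        constructor <;> linarith
      · simp only [min_eq_right h, max_eq_left h] at h1 h2
        constructor <;> linarith
    rcases lt_or_gt_of_ne hts' with h | h
    -- t < s
    · have hcont : ContinuousOn f (Icc t s) := by
        apply (hfd.continuousOn).mono
        intro x hx
        exact (hball x (hsub x (le_trans (min_le_right s t) hx.1)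
          (le_trans hx.2 (le_max_left s t)))).2
      obtain ⟨c, hc, hc0⟩ := exists_deriv_eq_zero h hcont (by rw [hft, hfs])
      have hcb : c ∈ Metric.ball s ε :=
        hsub c (le_trans (min_le_right s t) (le_of_lt hc.1))
          (le_trans (le_of_lt hc.2) (le_max_left s t))
      exact (hball c hcb).1 (ne_of_lt hc.2) hc0
    -- s < t
    · have hcont : ContinuousOn f (Icc s t) := by
        apply (hfd.continuousOn).mono
        intro x hx
        exact (hball x (hsub x (le_trans (min_le_left s t) hx.1)
          (le_trans hx.2 (le_max_right s t)))).2
      obtain ⟨c, hc, hc0⟩ := exists_deriv_eq_zero h hcont (by rw [hft, hfs])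
      have hcb : c ∈ Metric.ball s ε :=
        hsub c (le_trans (min_le_left s t) (le_of_lt hc.1))
          (le_trans (le_of_lt hc.2) (le_max_right s t))
      exact (hball c hcb).1 (ne_of_gt hc.1) hc0

/-- If `φ : Ω → ℝ^{n+1}` is `n`-times differentiable with `φ(s), φ'(s), …, φ⁽ⁿ⁾(s)`
linearly independent at every `s ∈ Ω`, then the zero set of `ℓ ∘ φ` is discrete in `Ω`
for every nonzero linear functional `ℓ`. -/
theorem zero_set_discrete (n : ℕ) (Ω : Set ℝ) (hΩ : IsOpen Ω)
    (φ : ℝ → (Fin (n + 1) → ℝ))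
    (hdiff : ∀ s ∈ Ω, ContDiffAt ℝ n φ s)
    (hnd : ∀ s ∈ Ω, LinearIndependent ℝ (fun k : Fin (n + 1) => iteratedDeriv (k : ℕ) φ s))
    (ℓ : (Fin (n + 1) → ℝ) →ₗ[ℝ] ℝ) (hℓ : ℓ ≠ 0) :
    ∀ s ∈ Ω, ∃ U ∈ 𝓝 s, ∀ t ∈ U ∩ Ω, t ≠ s → ℓ (φ t) ≠ 0 := by
  classical
  intro s hs
  set g : (Fin (n + 1) → ℝ) →L[ℝ] ℝ := LinearMap.toContinuousLinearMap ℓ with hg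
  -- get an open neighborhood where φ is C^n
  obtain ⟨u₀, hu₀, hcd₀⟩ := (hdiff s hs).contDiffOn le_rfl (by simp)
  set u : Set ℝ := interior u₀ with hu
  have huo : IsOpen u := isOpen_interior
  have hsu : s ∈ u := mem_interior_iff_mem_nhds.mpr hu₀
  have hcd : ContDiffOn ℝ n φ u := hcd₀.mono interior_subset
  -- the key formula for iterated derivatives of ℓ ∘ φ
  have key : ∀ k : ℕ, (k : ℕ∞) ≤ n → ∀ x ∈ u,
      iteratedDeriv k (fun t => ℓ (φ t)) x = ℓ (iteratedDeriv k φ x) := by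
    intro k hk x hx
    have h1 : iteratedFDeriv ℝ k (g ∘ φ) x =
        g.compContinuousMultilinearMap (iteratedFDeriv ℝ k φ x) := by
      rw [← iteratedFDerivWithin_of_isOpen k huo hx, ← iteratedFDerivWithin_of_isOpen k huo hx]
      exact g.iteratedFDerivWithin_comp_left (hcd x hx) huo.uniqueDiffOn hx (by exact_mod_cast hk)
    have h2 : iteratedDeriv k (g ∘ φ) x = g (iteratedDeriv k φ x) := by
      rw [iteratedDeriv_eq_iteratedFDeriv, iteratedDeriv_eq_iteratedFDeriv, h1]
      rfl
    simpa [Function.comp_def, hg] using h2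
  -- existence of k with ℓ (φ^{(k)}(s)) ≠ 0
  have hex : ∃ m : ℕ, ℓ (iteratedDeriv m φ s) ≠ 0 := by
    by_contra hcon
    push_neg at hcon
    apply hℓ
    have hcard : (Fintype.card (Fin (n + 1))) =
        Module.finrank ℝ (Fin (n + 1) → ℝ) := by simp
    let B := basisOfLinearIndependentOfCardEqFinrank (hnd s hs) hcard
    apply B.ext
    intro i
    have hBi : B i = iteratedDeriv (i : ℕ) φ s :=
      congrFun (coe_basisOfLinearIndependentOfCardEqFinrank (hnd s hs) hcard) i
    rw [hBi]
    simpa using hcon i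
  set k₀ := Nat.find hex with hk₀
  have hk₀spec : ℓ (iteratedDeriv k₀ φ s) ≠ 0 := Nat.find_spec hex
  have hk₀min : ∀ j < k₀, ℓ (iteratedDeriv j φ s) = 0 := by
    intro j hj
    by_contra hc
    exact absurd (Nat.find_le hc) (not_le.mpr hj)
  have hk₀le : k₀ ≤ n := by
    obtain ⟨m, hm⟩ := hex
    -- the witness found via the basis has index < n + 1?  Use the basis directly:
    by_contra hcon
    push_neg at hcon
    -- all iterated derivatives up to n yield 0, but they span
    apply hℓ
    have hcard : (Fintype.card (Fin (n + 1))) =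
        Module.finrank ℝ (Fin (n + 1) → ℝ) := by simp
    let B := basisOfLinearIndependentOfCardEqFinrank (hnd s hs) hcard
    apply B.ext
    intro i
    have hBi : B i = iteratedDeriv (i : ℕ) φ s :=
      congrFun (coe_basisOfLinearIndependentOfCardEqFinrank (hnd s hs) hcard) i
    rw [hBi]
    simpa using hk₀min (i : ℕ) (lt_of_lt_of_le i.isLt (show n + 1 ≤ k₀ by omega))
  -- apply the key lemma to f = ℓ ∘ φ
  have hfc : ContDiffOn ℝ k₀ (fun t => ℓ (φ t)) u := by
    have : ContDiffOn ℝ n (fun t => g (φ t)) u := g.contDiff.comp_contDiffOn hcd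
    exact (this.of_le (by exact_mod_cast hk₀le))
  have hmain : ∀ᶠ t in 𝓝[≠] s, ℓ (φ t) ≠ 0 := by
    apply isolated_zero_aux k₀ (fun t => ℓ (φ t)) u huo s hsu hfc
    · intro j hj
      rw [key j (by exact_mod_cast le_trans (le_of_lt hj) hk₀le) s hsu]
      exact hk₀min j hj
    · rw [key k₀ (by exact_mod_cast hk₀le) s hsu]
      exact hk₀spec
  rw [eventually_nhdsWithin_iff] at hmain
  obtain ⟨U, hU, hUspec⟩ := eventually_iff_exists_mem.mp hmain
  exact ⟨U, hU, fun t ht hts => hUspec t ht.1 hts⟩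
end

section
/- (Pyartli's twisting lemma) Let F : Δ → ℒ be C^{n+1} on a neighborhood Δ of 0 in 𝒯, with DF(0) = 0, where 𝒯 ⊕ ℒ = ℝ^{n+1}, dim 𝒯 = d, dim ℒ = n+1−d, and fix φ₀ ∈ ℒ. Define ζ(r) = φ₀ + gγ(r) + F(gγ(r)) where γ(r) = re₁ + ∑_{i=2}^{d} r^{n−d+i}eᵢ and g ∈ SO(d) acts on 𝒯 (with orthonormal basis e₁,…,e_d). If the curve ρ(r) = φ₀ + r·ge₁ + F(r·ge₁) is nondegenerate at 0 in ℒ + ℝ·ge₁ (its derivatives of orders 0,…,n−d+1 at 0 span ℒ + ℝ·ge₁), then ζ is nondegenerate at 0 in ℝ^{n+1}, i.e. ζ(0), ζ'(0), …, ζ⁽ⁿ⁾(0) span ℝ^{n+1}. -/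
open Matrix Finset

section PyartliAux

open Set Topology

variable {E : Type*} [NormedAddCommGroup E] [NormedSpace ℝ E]
variable {E' : Type*} [NormedAddCommGroup E'] [NormedSpace ℝ E']

lemma aux_within {k : ℕ} {s : Set ℝ} {f : ℝ → E} (hs : IsOpen s) {x : ℝ} (hx : x ∈ s) :
    iteratedDerivWithin k f s x = iteratedDeriv k f x := by
  rw [iteratedDerivWithin_eq_iteratedFDerivWithin, iteratedDeriv_eq_iteratedFDeriv,
    iteratedFDerivWithin_of_isOpen k hs hx]

lemma aux_add {N k : ℕ} (hk : k ≤ N) {s : Set ℝ} (hs : IsOpen s) {x : ℝ} (hx : x ∈ s)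
    {f g : ℝ → E} (hf : ContDiffOn ℝ N f s) (hg : ContDiffOn ℝ N g s) :
    iteratedDeriv k (fun r => f r + g r) x = iteratedDeriv k f x + iteratedDeriv k g x := by
  rw [← aux_within hs hx (f := fun r => f r + g r), ← aux_within hs hx (f := f),
    ← aux_within hs hx (f := g)]
  exact iteratedDerivWithin_add hx hs.uniqueDiffOn ((hf.contDiffWithinAt hx).of_le (by exact_mod_cast hk))
    ((hg.contDiffWithinAt hx).of_le (by exact_mod_cast hk))

lemma aux_mono_fun (m : ℕ) (v : E) (k : ℕ) : iteratedDeriv k (fun r : ℝ => r ^ m • v)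
    = fun r => ((m.descFactorial k : ℝ) * r ^ (m - k)) • v := by
  induction k with
  | zero => funext r; simp
  | succ k ih =>
    funext r
    rw [iteratedDeriv_succ, ih]
    have h1 : DifferentiableAt ℝ (fun r : ℝ => (m.descFactorial k : ℝ) * r ^ (m - k)) r :=
      (differentiableAt_pow _).const_mul _
    rw [deriv_smul_const h1, deriv_const_mul _ (differentiableAt_pow _), deriv_pow_field]
    congr 1
    rw [Nat.descFactorial_succ, Nat.sub_sub]
    push_cast
    ring

lemma aux_mono (m : ℕ) (v : E) (k : ℕ) :
    iteratedDeriv k (fun r : ℝ => r ^ m • v) 0 = if k = m then (m.factorial : ℝ) • v else 0 := by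
  have := congrFun (aux_mono_fun m v k) 0
  rw [this]
  rcases lt_trichotomy k m with h | h | h
  · rw [if_neg h.ne, zero_pow (by omega), mul_zero, zero_smul]
  · subst h
    rw [if_pos rfl, Nat.sub_self, pow_zero, mul_one, Nat.descFactorial_self]
  · rw [if_neg h.ne', Nat.descFactorial_eq_zero_iff_lt.2 h]
    simp

lemma aux_mono_smooth (m : ℕ) (v : E) (N : ℕ∞) : ContDiff ℝ N (fun r : ℝ => r ^ m • v) :=
  (contDiff_id.pow m).smul contDiff_const

lemma aux_sum {ι : Type*} (t : Finset ι) (m : ι → ℕ) (v : ι → E) (k : ℕ) :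
    iteratedDeriv k (fun r : ℝ => ∑ i ∈ t, r ^ m i • v i) 0
      = ∑ i ∈ t, (if k = m i then ((m i).factorial : ℝ) • v i else 0) := by
  classical
  induction t using Finset.induction with
  | empty =>
    simp only [Finset.sum_empty]
    have : (fun _ : ℝ => (0 : E)) = fun r : ℝ => r ^ 0 • (0 : E) := by funext r; simp
    rw [this, aux_mono]
    simp
  | insert a t' h ih =>
    have hsum : (fun r : ℝ => ∑ i ∈ insert a t', r ^ m i • v i)
        = fun r : ℝ => (r ^ m a • v a) + ∑ i ∈ t', r ^ m i • v i := by
      funext r; rw [Finset.sum_insert h]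
    rw [hsum, Finset.sum_insert h,
      aux_add (le_refl k) isOpen_univ (Set.mem_univ 0)
        ((aux_mono_smooth (m a) (v a) k).contDiffOn)
        ((ContDiff.sum fun i _ => aux_mono_smooth (m i) (v i) k).contDiffOn),
      aux_mono, ih]

lemma aux_comp {N k : ℕ} (hk : k ≤ N) {F : E → E'} {f g : ℝ → E}
    (hf : ContDiff ℝ N f) (hg : ContDiff ℝ N g) (hF : ContDiffAt ℝ N F (f 0))
    (h0 : f 0 = g 0)
    (hj : ∀ j, j ≤ k → iteratedDeriv j f 0 = iteratedDeriv j g 0) :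
    iteratedDeriv k (F ∘ f) 0 = iteratedDeriv k (F ∘ g) 0 := by
  obtain ⟨u, hu, huF⟩ := hF.contDiffOn le_rfl (by simp)
  set u' := interior u with hu'def
  have hu'o : IsOpen u' := isOpen_interior
  have h0u' : f 0 ∈ u' := mem_interior_iff_mem_nhds.2 hu
  have hFu : ContDiffOn ℝ N F u' := huF.mono interior_subset
  have hq : HasFTaylorSeriesUpToOn N F (ftaylorSeriesWithin ℝ F u') u' :=
    hFu.ftaylorSeriesWithin hu'o.uniqueDiffOn
  set s : Set ℝ := f ⁻¹' u' ∩ g ⁻¹' u' with hsdef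
  have hso : IsOpen s := (hu'o.preimage hf.continuous).inter (hu'o.preimage hg.continuous)
  have h0s : (0 : ℝ) ∈ s := ⟨h0u', by simpa [Set.mem_preimage, ← h0] using h0u'⟩
  have hud : UniqueDiffOn ℝ s := hso.uniqueDiffOn
  have hfs : HasFTaylorSeriesUpToOn N f (ftaylorSeriesWithin ℝ f s) s :=
    hf.contDiffOn.ftaylorSeriesWithin hud
  have hgs : HasFTaylorSeriesUpToOn N g (ftaylorSeriesWithin ℝ g s) s :=
    hg.contDiffOn.ftaylorSeriesWithin hud
  have Hf := hq.comp hfs (fun x hx => hx.1)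
  have Hg := hq.comp hgs (fun x hx => hx.2)
  have Ef : iteratedFDeriv ℝ k (F ∘ f) 0 =
      ((ftaylorSeriesWithin ℝ F u' (f 0)).taylorComp (ftaylorSeriesWithin ℝ f s 0)) k := by
    rw [← iteratedFDerivWithin_of_isOpen k hso h0s]
    exact (Hf.eq_iteratedFDerivWithin_of_uniqueDiffOn (by exact_mod_cast hk) hud h0s).symm
  have Eg : iteratedFDeriv ℝ k (F ∘ g) 0 =
      ((ftaylorSeriesWithin ℝ F u' (g 0)).taylorComp (ftaylorSeriesWithin ℝ g s 0)) k := by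
    rw [← iteratedFDerivWithin_of_isOpen k hso h0s]
    exact (Hg.eq_iteratedFDerivWithin_of_uniqueDiffOn (by exact_mod_cast hk) hud h0s).symm
  have hcoef : ∀ j, j ≤ k → ftaylorSeriesWithin ℝ f s 0 j = ftaylorSeriesWithin ℝ g s 0 j := by
    intro j hjk
    have hiter : iteratedFDeriv ℝ j f 0 = iteratedFDeriv ℝ j g 0 := by
      ext v
      rw [iteratedFDeriv_apply_eq_iteratedDeriv_mul_prod,
        iteratedFDeriv_apply_eq_iteratedDeriv_mul_prod, hj j hjk]
    show iteratedFDerivWithin ℝ j f s 0 = iteratedFDerivWithin ℝ j g s 0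
    rw [iteratedFDerivWithin_of_isOpen j hso h0s, iteratedFDerivWithin_of_isOpen j hso h0s, hiter]
  have hfd : iteratedFDeriv ℝ k (F ∘ f) 0 = iteratedFDeriv ℝ k (F ∘ g) 0 := by
    rw [Ef, Eg, ← h0]
    unfold FormalMultilinearSeries.taylorComp
    refine Finset.sum_congr rfl fun c _ => ?_
    unfold FormalMultilinearSeries.compAlongOrderedFinpartition
    congr 1
    funext i
    exact hcoef _ (c.partSize_le i)
  rw [iteratedDeriv_eq_iteratedFDeriv, iteratedDeriv_eq_iteratedFDeriv, hfd]

lemma aux_memL [FiniteDimensional ℝ E] {N k : ℕ} (hk : k ≤ N) {T' L' : Submodule ℝ E}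
    (hc : IsCompl T' L') {f : ℝ → E} {s : Set ℝ} (hs : IsOpen s) (h0 : (0 : ℝ) ∈ s)
    (hf : ContDiffOn ℝ N f s) (hfL : ∀ x, f x ∈ L') :
    iteratedDeriv k f 0 ∈ L' := by
  set π₀ : E →ₗ[ℝ] E := L'.subtype ∘ₗ (L'.projectionOnto T' hc.symm) with hπ₀
  set π : E →L[ℝ] E := LinearMap.toContinuousLinearMap π₀ with hπ
  have hπval : ∀ y, π y ∈ L' := fun y => by
    simp only [hπ, hπ₀, LinearMap.coe_toContinuousLinearMap', LinearMap.coe_comp,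
      Function.comp_apply, Submodule.coe_subtype]
    exact Submodule.coe_mem _
  have hπid : ∀ y ∈ L', π y = y := fun y hy => by
    simp only [hπ, hπ₀, LinearMap.coe_toContinuousLinearMap', LinearMap.coe_comp,
      Function.comp_apply, Submodule.coe_subtype,
      Submodule.projectionOnto_apply_left hc.symm ⟨y, hy⟩]
  have hfeq : (⇑π ∘ f) = f := funext fun x => hπid _ (hfL x)
  have hcomp := π.iteratedFDerivWithin_comp_left (hf.contDiffWithinAt h0) hs.uniqueDiffOn h0
    (i := k) (by exact_mod_cast hk)
  have h2 : iteratedDeriv k f 0 = π (iteratedDeriv k f 0) := by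
    conv_lhs => rw [← hfeq]
    rw [← aux_within hs h0 (f := ⇑π ∘ f), ← aux_within hs h0 (f := f),
      iteratedDerivWithin_eq_iteratedFDerivWithin, iteratedDerivWithin_eq_iteratedFDerivWithin,
      hcomp]
    rfl
  rw [h2]; exact hπval _

end PyartliAux

/-- Pyartli's twisting lemma: if the planar section curve `ρ(r) = φ₀ + r·ge₁ + F(r·ge₁)`
is nondegenerate at `0` in `ℒ + ℝ·ge₁`, then the twisted curve
`ζ(r) = φ₀ + gγ(r) + F(gγ(r))`, with `γ(r) = re₁ + ∑_{i=2}^d r^{n-d+i}eᵢ`,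
is nondegenerate at `0` in `ℝ^{n+1}`. -/
theorem pyartli_twisting (d n : ℕ) (hd : 2 ≤ d) (hdn : d ≤ n)
    (T L : Submodule ℝ (Fin (n + 1) → ℝ)) (hTL : IsCompl T L)
    (hdimT : Module.finrank ℝ T = d)
    (e : Fin d → (Fin (n + 1) → ℝ)) (heT : ∀ i, e i ∈ T)
    (hortho : ∀ i j, dotProduct (e i) (e j) = if i = j then 1 else 0)
    (g : Matrix (Fin d) (Fin d) ℝ) (hgo : g * g.transpose = 1) (hgdet : g.det = 1)
    (ge : Fin d → (Fin (n + 1) → ℝ)) (hge : ∀ i, ge i = ∑ j, g j i • e j)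
    (φ₀ : Fin (n + 1) → ℝ) (hφ₀ : φ₀ ∈ L)
    (F : (Fin (n + 1) → ℝ) → (Fin (n + 1) → ℝ))
    (hF : ContDiffAt ℝ (n + 1) F 0) (hFL : ∀ x, F x ∈ L) (hDF : fderiv ℝ F 0 = 0)
    (γ ζ ρ : ℝ → (Fin (n + 1) → ℝ))
    (hγ : ∀ r, γ r = ∑ i : Fin d,
      (if (i : ℕ) = 0 then r else r ^ (n - d + (i : ℕ) + 1)) • ge i)
    (hζ : ∀ r, ζ r = φ₀ + γ r + F (γ r))
    (hρ : ∀ r, ρ r = φ₀ + r • ge ⟨0, by omega⟩ + F (r • ge ⟨0, by omega⟩))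
    (hρnd : Submodule.span ℝ
        (Set.range (fun k : Fin (n - d + 2) => iteratedDeriv (k : ℕ) ρ 0))
      = L ⊔ Submodule.span ℝ {ge ⟨0, by omega⟩}) :
    Submodule.span ℝ
      (Set.range (fun k : Fin (n + 1) => iteratedDeriv (k : ℕ) ζ 0)) = ⊤ := by
  classical
  have hd0 : 0 < d := by omega
  set i₀ : Fin d := ⟨0, hd0⟩ with hi₀
  set e1 : Fin (n + 1) → ℝ := ge i₀ with he1
  set m : Fin d → ℕ := fun i => if (i : ℕ) = 0 then 1 else n - d + (i : ℕ) + 1 with hm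
  set line : ℝ → (Fin (n + 1) → ℝ) := fun r => r ^ 1 • e1 with hline
  have hγ' : γ = fun r => ∑ i : Fin d, r ^ m i • ge i := by
    funext r; rw [hγ]
    refine Finset.sum_congr rfl fun i _ => ?_
    by_cases h : (i : ℕ) = 0 <;> simp [hm, h]
  have hγsm : ContDiff ℝ ((n + 1 : ℕ) : ℕ∞) γ := by
    rw [hγ']; exact ContDiff.sum fun i _ => aux_mono_smooth _ _ _
  have hlinesm : ContDiff ℝ ((n + 1 : ℕ) : ℕ∞) line := aux_mono_smooth _ _ _
  have hγ0 : γ 0 = 0 := by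
    rw [hγ']
    refine Finset.sum_eq_zero fun i _ => ?_
    have hmi : m i ≠ 0 := by by_cases h : (i : ℕ) = 0 <;> simp [hm, h]
    rw [zero_pow hmi, zero_smul]
  have hline0 : line 0 = 0 := by simp [hline]
  have hγk : ∀ k : ℕ, iteratedDeriv k γ 0
      = ∑ i : Fin d, (if k = m i then ((m i).factorial : ℝ) • ge i else 0) := by
    intro k; rw [hγ']; exact aux_sum Finset.univ m ge k
  have hlow : ∀ k : ℕ, k ≤ n - d + 1 → iteratedDeriv k γ 0 = iteratedDeriv k line 0 := by
    intro k hk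
    rw [hγk, hline, aux_mono 1 e1 k]
    rw [Finset.sum_eq_single i₀]
    · have hmi : m i₀ = 1 := by simp [hm, hi₀]
      rw [hmi]
    · intro i _ hne
      have hiv : (i : ℕ) ≠ 0 := fun h => hne (Fin.ext (by simp [hi₀, h]))
      have hmi : m i = n - d + (i : ℕ) + 1 := by simp [hm, hiv]
      rw [hmi, if_neg (by omega)]
    · intro h; exact absurd (Finset.mem_univ i₀) h
  have htw : ∀ i : Fin d, (i : ℕ) ≠ 0 →
      iteratedDeriv (n - d + (i : ℕ) + 1) γ 0
        = ((n - d + (i : ℕ) + 1).factorial : ℝ) • ge i := by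
    intro i hiv
    rw [hγk, Finset.sum_eq_single i]
    · rw [if_pos (by simp [hm, hiv])]
      simp [hm, hiv]
    · intro j _ hne
      by_cases hjv : (j : ℕ) = 0
      · have hmj : m j = 1 := by simp [hm, hjv]
        rw [hmj, if_neg (by omega)]
      · have hmj : m j = n - d + (j : ℕ) + 1 := by simp [hm, hjv]
        have hji : (j : ℕ) ≠ (i : ℕ) := fun h => hne (Fin.ext h)
        rw [hmj, if_neg (by omega)]
    · intro h; exact absurd (Finset.mem_univ i) h
  -- local smoothness data for F
  have hF' : ContDiffAt ℝ ((n + 1 : ℕ) : ℕ∞) F 0 := by exact_mod_cast hF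
  obtain ⟨u, hu, huF⟩ := hF'.contDiffOn le_rfl (by simp)
  set u' := interior u with hu'def
  have hu'o : IsOpen u' := isOpen_interior
  have h0u' : (0 : Fin (n + 1) → ℝ) ∈ u' := mem_interior_iff_mem_nhds.2 hu
  have hFu : ContDiffOn ℝ ((n + 1 : ℕ) : ℕ∞) F u' := huF.mono interior_subset
  set s : Set ℝ := γ ⁻¹' u' ∩ line ⁻¹' u' with hsdef
  have hso : IsOpen s := (hu'o.preimage hγsm.continuous).inter (hu'o.preimage hlinesm.continuous)
  have h0s : (0 : ℝ) ∈ s := by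
    constructor
    · show γ 0 ∈ u'; rw [hγ0]; exact h0u'
    · show line 0 ∈ u'; rw [hline0]; exact h0u'
  have hFγ : ContDiffOn ℝ ((n + 1 : ℕ) : ℕ∞) (F ∘ γ) s :=
    hFu.comp hγsm.contDiffOn (fun x hx => hx.1)
  have hFl : ContDiffOn ℝ ((n + 1 : ℕ) : ℕ∞) (F ∘ line) s :=
    hFu.comp hlinesm.contDiffOn (fun x hx => hx.2)
  have hconstd : ∀ k : ℕ, iteratedDeriv k (fun _ : ℝ => φ₀) 0 = if k = 0 then φ₀ else 0 := by
    intro k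
    have hc : (fun _ : ℝ => φ₀) = fun r : ℝ => r ^ 0 • φ₀ := by funext r; simp
    rw [hc, aux_mono]
    simp
  have hζd : ∀ k : ℕ, k ≤ n + 1 → iteratedDeriv k ζ 0
      = ((if k = 0 then φ₀ else 0) + iteratedDeriv k γ 0) + iteratedDeriv k (F ∘ γ) 0 := by
    intro k hk
    have h1 : ζ = fun r => (fun r' => φ₀ + γ r') r + (F ∘ γ) r := funext fun r => by
      rw [hζ r]; rfl
    rw [h1, aux_add hk hso h0s ((contDiff_const.add hγsm).contDiffOn) hFγ,
      aux_add hk hso h0s contDiff_const.contDiffOn hγsm.contDiffOn, hconstd]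
  have hρ' : ρ = fun r => (fun r' => φ₀ + line r') r + (F ∘ line) r := by
    funext r
    rw [hρ r]
    simp only [hline, pow_one, Function.comp_apply]
  have hρd : ∀ k : ℕ, k ≤ n + 1 → iteratedDeriv k ρ 0
      = ((if k = 0 then φ₀ else 0) + iteratedDeriv k line 0) + iteratedDeriv k (F ∘ line) 0 := by
    intro k hk
    rw [hρ', aux_add hk hso h0s ((contDiff_const.add hlinesm).contDiffOn) hFl,
      aux_add hk hso h0s contDiff_const.contDiffOn hlinesm.contDiffOn, hconstd]
  have hcompd : ∀ k : ℕ, k ≤ n - d + 1 →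
      iteratedDeriv k (F ∘ γ) 0 = iteratedDeriv k (F ∘ line) 0 := by
    intro k hk
    refine aux_comp (N := n + 1) (by omega) hγsm hlinesm ?_ (by rw [hγ0, hline0]) ?_
    · rw [hγ0]; exact hF'
    · intro j hj; exact hlow j (le_trans hj hk)
  have hsame : ∀ k : ℕ, k ≤ n - d + 1 → iteratedDeriv k ζ 0 = iteratedDeriv k ρ 0 := by
    intro k hk
    rw [hζd k (by omega), hρd k (by omega), hlow k hk, hcompd k hk]
  have hmem : ∀ k : ℕ, k ≤ n + 1 → iteratedDeriv k (F ∘ γ) 0 ∈ L :=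
    fun k hk => aux_memL hk hTL hso h0s hFγ (fun x => hFL _)
  have hz_tw : ∀ i : Fin d, (i : ℕ) ≠ 0 →
      iteratedDeriv (n - d + (i : ℕ) + 1) ζ 0
        = ((n - d + (i : ℕ) + 1).factorial : ℝ) • ge i
          + iteratedDeriv (n - d + (i : ℕ) + 1) (F ∘ γ) 0 := by
    intro i hiv
    have hkn : n - d + (i : ℕ) + 1 ≤ n := by have := i.2; omega
    rw [hζd _ (by omega), htw i hiv, if_neg (by omega), zero_add]
  -- span bookkeeping
  set S := Submodule.span ℝ
      (Set.range (fun k : Fin (n + 1) => iteratedDeriv (k : ℕ) ζ 0)) with hS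
  have hρsub : L ⊔ Submodule.span ℝ {ge ⟨0, by omega⟩} ≤ S := by
    rw [← hρnd]
    refine Submodule.span_le.2 ?_
    rintro x ⟨k, rfl⟩
    have hk : (k : ℕ) ≤ n - d + 1 := by have := k.2; omega
    show iteratedDeriv (k : ℕ) ρ 0 ∈ S
    rw [← hsame _ hk]
    exact Submodule.subset_span ⟨⟨(k : ℕ), by omega⟩, rfl⟩
  have hLS : L ≤ S := le_trans le_sup_left hρsub
  have he1S : e1 ∈ S :=
    hρsub (Submodule.mem_sup_right (Submodule.subset_span rfl))
  have hgeS : ∀ i : Fin d, ge i ∈ S := by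
    intro i
    by_cases hiv : (i : ℕ) = 0
    · have : i = i₀ := Fin.ext hiv
      rw [this]; exact he1S
    · set k := n - d + (i : ℕ) + 1 with hkdef
      have hkn : k ≤ n := by have := i.2; omega
      have h1 : iteratedDeriv k ζ 0 ∈ S :=
        Submodule.subset_span ⟨⟨k, by omega⟩, rfl⟩
      have h2 : iteratedDeriv k (F ∘ γ) 0 ∈ S := hLS (hmem k (by omega))
      have h3 : (k.factorial : ℝ) • ge i ∈ S := by
        have heq : (k.factorial : ℝ) • ge i
            = iteratedDeriv k ζ 0 - iteratedDeriv k (F ∘ γ) 0 := by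
          rw [hz_tw i hiv]; abel
        rw [heq]; exact Submodule.sub_mem S h1 h2
      have hne : (k.factorial : ℝ) ≠ 0 := Nat.cast_ne_zero.2 k.factorial_ne_zero
      have := Submodule.smul_mem S (k.factorial : ℝ)⁻¹ h3
      rwa [inv_smul_smul₀ hne] at this
  have heS : ∀ j : Fin d, e j ∈ S := by
    intro j
    have hrec : e j = ∑ i : Fin d, g j i • ge i := by
      have h1 : ∑ i : Fin d, g j i • ge i
          = ∑ l : Fin d, (∑ i : Fin d, g j i * g l i) • e l := by
        simp_rw [hge, Finset.smul_sum, smul_smul]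
        rw [Finset.sum_comm]
        simp_rw [← Finset.sum_smul]
      have h2 : ∀ l, (∑ i : Fin d, g j i * g l i) = if j = l then (1 : ℝ) else 0 := by
        intro l
        have := congrFun (congrFun hgo j) l
        simpa [Matrix.mul_apply, Matrix.transpose_apply, Matrix.one_apply] using this
      rw [h1]
      simp [h2, ite_smul]
    rw [hrec]
    exact Submodule.sum_mem S fun i _ => Submodule.smul_mem S _ (hgeS i)
  have hli : LinearIndependent ℝ e := by
    rw [Fintype.linearIndependent_iff]
    intro c hc j
    have hdot := congrArg (fun v => dotProduct v (e j)) hc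
    simp only [dotProduct, Finset.sum_apply, Pi.smul_apply, smul_eq_mul,
      Pi.zero_apply, Finset.sum_mul, zero_dotProduct] at hdot
    have hexp : ∑ i : Fin d, c i * dotProduct (e i) (e j)
        = ∑ y : Fin d, ∑ x : Fin (n + 1), c y * e y x * e j x := by
      refine Finset.sum_congr rfl fun i _ => ?_
      simp [dotProduct, Finset.mul_sum, mul_assoc]
    have hzero : ∑ i : Fin d, c i * dotProduct (e i) (e j) = 0 := by
      rw [hexp, Finset.sum_comm, hdot]; simp
    rw [Finset.sum_congr rfl (fun i _ => by rw [hortho i j])] at hzero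
    simpa [Finset.sum_ite_eq'] using hzero
  have hspan : Submodule.span ℝ (Set.range e) = T := by
    apply Submodule.eq_of_le_of_finrank_le
      (Submodule.span_le.2 (Set.range_subset_iff.2 heT))
    rw [hdimT, finrank_span_eq_card hli]
    simp
  have hTS : T ≤ S := by
    rw [← hspan]
    exact Submodule.span_le.2 (Set.range_subset_iff.2 heS)
  rw [eq_top_iff, ← hTL.sup_eq_top]
  exact sup_le hTS hLS
end
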